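/- Let W be a unitary operator on ℂ^d and k ≥ 1 an integer. Then Θ(W^⊗k) ≥ min(k·Θ(W), π), where W^⊗k is the k-fold tensor power of W. -/

import Mathlib

open Complex Matrix

/-- The length of the smallest closed arc of the unit circle containing the spectrum
of a matrix. -/
noncomputable def arcTheta {n : Type*} [Fintype n] [DecidableEq n]
    (U : Matrix n n ℂ) : ℝ :=
  sInf {L : ℝ | 0 ≤ L ∧ ∃ a : ℝ, ∀ z ∈ spectrum ℂ U,
    ∃ t ∈ Set.Icc a (a + L), z = Complex.exp (Complex.I * t)}

/-- The k-fold tensor (Kronecker) power of a matrix, acting on (ℂ^d)^{⊗k}. -/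
noncomputable def tensorPow {d : ℕ} (W : Matrix (Fin d) (Fin d) ℂ) (k : ℕ) :
    Matrix (Fin k → Fin d) (Fin k → Fin d) ℂ :=
  fun x y => ∏ i : Fin k, W (x i) (y i)

section Helpers

variable {n : Type*} [Fintype n] [DecidableEq n]

lemma mem_spec_of_eig (M : Matrix n n ℂ) {μ : ℂ} {v : n → ℂ} (hv : v ≠ 0)
    (h : M *ᵥ v = μ • v) : μ ∈ spectrum ℂ M := by
  rw [spectrum.mem_iff]
  intro hu
  rw [Matrix.isUnit_iff_isUnit_det] at hu
  have h0 : ∃ w, w ≠ 0 ∧ (algebraMap ℂ (Matrix n n ℂ) μ - M) *ᵥ w = 0 := by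
    refine ⟨v, hv, ?_⟩
    rw [Matrix.sub_mulVec, h]
    simp [Algebra.algebraMap_eq_smul_one, Matrix.smul_mulVec, Matrix.one_mulVec]
  rw [Matrix.exists_mulVec_eq_zero_iff] at h0
  exact hu.ne_zero h0

lemma eig_of_mem_spec (M : Matrix n n ℂ) {μ : ℂ} (h : μ ∈ spectrum ℂ M) :
    ∃ v : n → ℂ, v ≠ 0 ∧ M *ᵥ v = μ • v := by
  rw [spectrum.mem_iff] at h
  rw [Matrix.isUnit_iff_isUnit_det, isUnit_iff_ne_zero, not_not,
    ← Matrix.exists_mulVec_eq_zero_iff] at h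
  obtain ⟨v, hv, h0⟩ := h
  refine ⟨v, hv, ?_⟩
  rw [Matrix.sub_mulVec, sub_eq_zero] at h0
  rw [← h0]
  simp [Algebra.algebraMap_eq_smul_one, Matrix.smul_mulVec, Matrix.one_mulVec]

lemma abs_spec_unitary {M : Matrix n n ℂ} (hM : M ∈ Matrix.unitaryGroup n ℂ)
    {μ : ℂ} (h : μ ∈ spectrum ℂ M) : ‖μ‖ = 1 := by
  obtain ⟨v, hv, hMv⟩ := eig_of_mem_spec M h
  have h1 : star (M *ᵥ v) ⬝ᵥ (M *ᵥ v) = star v ⬝ᵥ v := by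
    rw [Matrix.star_mulVec, Matrix.dotProduct_mulVec, Matrix.vecMul_vecMul,
      ← Matrix.star_eq_conjTranspose, hM.1, Matrix.vecMul_one]
  have he : star v ⬝ᵥ v = ((∑ i, Complex.normSq (v i) : ℝ) : ℂ) := by
    push_cast
    simp only [dotProduct, Pi.star_apply, Complex.star_def]
    congr 1; funext i
    rw [mul_comm, Complex.mul_conj]
  have h3 : star v ⬝ᵥ v ≠ 0 := by
    rw [he]
    norm_cast
    intro h0
    apply hv
    funext i
    have := (Finset.sum_eq_zero_iff_of_nonneg
      (fun j _ => Complex.normSq_nonneg (v j))).mp h0 i (Finset.mem_univ i)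
    simpa using Complex.normSq_eq_zero.mp this
  rw [hMv] at h1
  have h2 : star (μ • v) ⬝ᵥ (μ • v) = (star μ * μ) * (star v ⬝ᵥ v) := by
    simp [smul_dotProduct, dotProduct_smul, smul_eq_mul, star_smul]
    ring
  rw [h2] at h1
  have h4 : star μ * μ = 1 := mul_right_cancel₀ h3 (h1.trans (one_mul _).symm)
  have h5 : Complex.normSq μ = 1 := by
    have : ((Complex.normSq μ : ℝ) : ℂ) = 1 := by
      rw [← h4, Complex.star_def, mul_comm, Complex.mul_conj]
    exact_mod_cast this
  have h6 : ‖μ‖ ^ 2 = 1 := by rw [Complex.sq_norm]; exact h5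
  exact (pow_left_inj₀ (norm_nonneg μ) zero_le_one two_ne_zero).mp
    (by rw [h6, one_pow])

end Helpers

lemma tensorPow_unitary {d : ℕ} (W : Matrix (Fin d) (Fin d) ℂ)
    (hW : W ∈ Matrix.unitaryGroup (Fin d) ℂ) (k : ℕ) :
    tensorPow W k ∈ Matrix.unitaryGroup (Fin k → Fin d) ℂ := by
  rw [Matrix.mem_unitaryGroup_iff']
  have hW1 : star W * W = 1 := hW.1
  ext x y
  simp only [Matrix.mul_apply, Matrix.star_apply, tensorPow, star_prod]
  have step1 : ∀ z : Fin k → Fin d,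
      (∏ i, star (W (z i) (x i))) * ∏ i, W (z i) (y i)
        = ∏ i, (star (W (z i) (x i)) * W (z i) (y i)) :=
    fun z => Finset.prod_mul_distrib.symm
  simp_rw [step1]
  have hswap := Finset.prod_univ_sum (fun _ : Fin k => (Finset.univ : Finset (Fin d)))
    (fun i j => star (W j (x i)) * W j (y i))
  rw [← Fintype.piFinset_univ, ← hswap]
  have step2 : ∀ i, (∑ j, star (W j (x i)) * W j (y i))
      = (1 : Matrix (Fin d) (Fin d) ℂ) (x i) (y i) := by
    intro i
    rw [← hW1]
    simp [Matrix.mul_apply, Matrix.star_eq_conjTranspose, Matrix.conjTranspose_apply]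
  rw [Finset.prod_congr rfl (fun i _ => step2 i)]
  by_cases hxy : x = y
  · simp [hxy, Matrix.one_apply]
  · obtain ⟨i, hi⟩ := Function.ne_iff.mp hxy
    rw [Matrix.one_apply, if_neg hxy]
    exact Finset.prod_eq_zero (Finset.mem_univ i) (by simp [Matrix.one_apply, hi])

lemma prod_mem_spec {d k : ℕ} (W : Matrix (Fin d) (Fin d) ℂ) (f : Fin k → ℂ)
    (hf : ∀ i, f i ∈ spectrum ℂ W) : (∏ i, f i) ∈ spectrum ℂ (tensorPow W k) := by
  choose v hv hWv using fun i => eig_of_mem_spec W (hf i)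
  set u : (Fin k → Fin d) → ℂ := fun x => ∏ i, v i (x i) with hu
  have hune : u ≠ 0 := by
    choose x hx using fun i => Function.ne_iff.mp (hv i)
    intro h0
    have := congrFun h0 x
    simp only [hu, Pi.zero_apply] at this
    exact (Finset.prod_ne_zero_iff.mpr (fun i _ => hx i)) this
  apply mem_spec_of_eig _ hune
  funext x
  simp only [Matrix.mulVec, dotProduct, tensorPow, hu, Pi.smul_apply, smul_eq_mul]
  have h1 : ∀ y : Fin k → Fin d,
      (∏ i, W (x i) (y i)) * ∏ i, v i (y i) = ∏ i, (W (x i) (y i) * v i (y i)) :=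
    fun y => Finset.prod_mul_distrib.symm
  simp_rw [h1]
  have hswap := Finset.prod_univ_sum (fun _ : Fin k => (Finset.univ : Finset (Fin d)))
    (fun i j => W (x i) j * v i j)
  rw [← Fintype.piFinset_univ, ← hswap]
  have h2 : ∀ i, (∑ j, W (x i) j * v i j) = f i * v i (x i) := by
    intro i
    have := congrFun (hWv i) (x i)
    simpa [Matrix.mulVec, dotProduct] using this
  rw [Finset.prod_congr rfl (fun i _ => h2 i), Finset.prod_mul_distrib]

lemma exp_I_eq {s t : ℝ} (h : Complex.exp (Complex.I * s) = Complex.exp (Complex.I * t)) :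
    ∃ m : ℤ, s = t + m * (2 * Real.pi) := by
  rw [Complex.exp_eq_exp_iff_exists_int] at h
  obtain ⟨m, hm⟩ := h
  refine ⟨m, ?_⟩
  have h2 : (s : ℂ) = (t : ℂ) + (m : ℂ) * (2 * (Real.pi : ℂ)) := by
    linear_combination (-Complex.I) * hm + ((s:ℂ) - t - m*(2*(Real.pi:ℂ))) * Complex.I_sq
  exact_mod_cast h2

lemma arc_step {a L : ℝ} (hLπ : L < Real.pi) {δ : ℝ} (hδ1 : -Real.pi < δ)
    (hδ2 : δ ≤ Real.pi) {s : ℝ} (hs : s ∈ Set.Icc a (a + L)) (m : ℕ)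
    (h : ∀ j : ℕ, j ≤ m → ∃ t ∈ Set.Icc a (a + L),
      Complex.exp (Complex.I * (s + j * δ)) = Complex.exp (Complex.I * t)) :
    s + m * δ ∈ Set.Icc a (a + L) := by
  have hπ := Real.pi_pos
  have hL0 : 0 ≤ L := by have := hs.1; have := hs.2; linarith
  induction m with
  | zero => simpa using hs
  | succ m ih =>
    have hprev : s + m * δ ∈ Set.Icc a (a + L) :=
      ih (fun j hj => h j (hj.trans (Nat.le_succ m)))
    obtain ⟨t, ht, he⟩ := h (m + 1) le_rfl
    have he' : Complex.exp (Complex.I * ((s + ((m : ℝ) + 1) * δ : ℝ) : ℂ))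
        = Complex.exp (Complex.I * (t : ℂ)) := by
      push_cast at he ⊢
      exact he
    obtain ⟨p, hp⟩ := exp_I_eq he'
    have hb1 : a ≤ s + m * δ := hprev.1
    have hb2 : s + m * δ ≤ a + L := hprev.2
    have ht1 : a ≤ t := ht.1
    have ht2 : t ≤ a + L := ht.2
    have hk1 : -(2 * Real.pi) < (p : ℝ) * (2 * Real.pi) := by nlinarith
    have hk2 : (p : ℝ) * (2 * Real.pi) < 2 * Real.pi := by nlinarith
    have hpm1 : (-1 : ℝ) < (p : ℝ) := by nlinarith
    have hp1 : ((p : ℝ)) < 1 := by nlinarith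
    have hp0 : p = 0 := by
      have h1' : (-1 : ℤ) < p := by exact_mod_cast hpm1
      have h2' : p < (1 : ℤ) := by exact_mod_cast hp1
      omega
    rw [hp0] at hp
    simp only [Int.cast_zero, zero_mul, add_zero] at hp
    have hgoal : s + ((m : ℝ) + 1) * δ ∈ Set.Icc a (a + L) := by
      rw [hp]; exact ht
    convert hgoal using 2
    push_cast
    ring

theorem theta_tensorPow_ge {d : ℕ} (W : Matrix (Fin d) (Fin d) ℂ)
    (hW : W ∈ Matrix.unitaryGroup (Fin d) ℂ) (k : ℕ) (hk : 1 ≤ k) :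
    min (k * arcTheta W) Real.pi ≤ arcTheta (tensorPow W k) := by
  have hπ := Real.pi_pos
  have hT := tensorPow_unitary W hW k
  have hSne : (2 * Real.pi) ∈ {L : ℝ | 0 ≤ L ∧ ∃ a : ℝ, ∀ z ∈ spectrum ℂ (tensorPow W k),
      ∃ t ∈ Set.Icc a (a + L), z = Complex.exp (Complex.I * t)} := by
    refine ⟨by positivity, -Real.pi, fun z hz => ⟨Complex.arg z,
      ⟨(Complex.neg_pi_lt_arg z).le, by linarith [Complex.arg_le_pi z]⟩, ?_⟩⟩
    have h1 := Complex.norm_mul_exp_arg_mul_I z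
    rw [abs_spec_unitary hT hz, Complex.ofReal_one, one_mul, mul_comm] at h1
    exact h1.symm
  refine le_csInf ⟨_, hSne⟩ ?_
  rintro L ⟨hL0, a, ha⟩
  rcases le_or_gt Real.pi L with hcase | hcase
  · exact min_le_of_right_le hcase
  refine min_le_of_left_le ?_
  have hk0 : (0 : ℝ) < k := by exact_mod_cast hk
  by_cases hspec : spectrum ℂ W = ∅
  · have h1 : arcTheta W ≤ 0 := csInf_le ⟨0, fun x hx => hx.1⟩
      ⟨le_refl 0, 0, by simp [hspec]⟩
    have h2 : 0 ≤ arcTheta W := Real.sInf_nonneg (fun x hx => hx.1)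
    have h3 : arcTheta W = 0 := le_antisymm h1 h2
    rw [h3, mul_zero]
    exact hL0
  obtain ⟨z₀, hz₀⟩ := Set.nonempty_iff_ne_empty.mpr hspec
  set θ₀ := Complex.arg z₀ with hθ₀
  have habs0 : ‖z₀‖ = 1 := abs_spec_unitary hW hz₀
  have hz₀ne : z₀ ≠ 0 := by intro h; rw [h] at habs0; simp at habs0
  have hz₀e : z₀ = Complex.exp (Complex.I * θ₀) := by
    have h1 := Complex.norm_mul_exp_arg_mul_I z₀
    rw [habs0, Complex.ofReal_one, one_mul, mul_comm] at h1
    exact h1.symm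
  have hz₀k : z₀ ^ k ∈ spectrum ℂ (tensorPow W k) := by
    have := prod_mem_spec W (fun _ : Fin k => z₀) (fun _ => hz₀)
    simpa [Finset.prod_const, Finset.card_univ, Fintype.card_fin] using this
  obtain ⟨t₀, ht₀, he₀⟩ := ha _ hz₀k
  have hek : Complex.exp (Complex.I * ((k : ℂ) * (θ₀ : ℂ)))
      = Complex.exp (Complex.I * (t₀ : ℂ)) := by
    rw [← he₀, hz₀e, ← Complex.exp_nat_mul]
    congr 1
    push_cast
    ring
  have hform : ∀ z ∈ spectrum ℂ W,
      z = Complex.exp (Complex.I * ((θ₀ : ℂ) + (Complex.arg (z / z₀) : ℂ))) := by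
    intro z hz
    have habsz : ‖z‖ = 1 := abs_spec_unitary hW hz
    have habsq : ‖z / z₀‖ = 1 := by
      rw [norm_div, habsz, habs0]; norm_num
    generalize hβ : Complex.arg (z / z₀) = β
    have h1 := Complex.norm_mul_exp_arg_mul_I (z / z₀)
    rw [habsq, Complex.ofReal_one, one_mul, hβ] at h1
    have h2 : z = z₀ * Complex.exp ((β : ℂ) * Complex.I) := by
      rw [h1, mul_div_cancel₀ _ hz₀ne]
    rw [h2, hz₀e, ← Complex.exp_add]
    congr 1
    ring
  have claimC : ∀ z ∈ spectrum ℂ W,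
      t₀ + (k : ℝ) * Complex.arg (z / z₀) ∈ Set.Icc a (a + L) := by
    intro z hz
    refine arc_step hcase (Complex.neg_pi_lt_arg (z / z₀)) (Complex.arg_le_pi (z / z₀))
      ht₀ k ?_
    intro j hj
    set δ : ℝ := Complex.arg (z / z₀) with hδdef
    have hmem : z₀ ^ (k - j) * z ^ j ∈ spectrum ℂ (tensorPow W k) := by
      have hp := prod_mem_spec W (fun i : Fin k => if (i : ℕ) < j then z else z₀)
        (fun i => by by_cases h : (i : ℕ) < j <;> simp [h, hz, hz₀])
      have heq : (∏ i : Fin k, if (i : ℕ) < j then z else z₀) = z₀ ^ (k - j) * z ^ j := by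
        rw [Fin.prod_univ_eq_prod_range (fun i => if i < j then z else z₀) k]
        have hrange : Finset.range k = Finset.range (j + (k - j)) := by congr 1; omega
        rw [hrange, Finset.prod_range_add]
        have e1 : (∏ x ∈ Finset.range j, if x < j then z else z₀) = z ^ j := by
          rw [Finset.prod_congr rfl (fun x hx => if_pos (Finset.mem_range.mp hx))]
          simp
        have e2 : (∏ x ∈ Finset.range (k - j), if j + x < j then z else z₀)
            = z₀ ^ (k - j) := by
          rw [Finset.prod_congr rfl (fun x _ => if_neg (by omega))]
          simp
        rw [e1, e2]; ring
      rwa [heq] at hp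
    obtain ⟨t, ht, he⟩ := ha _ hmem
    refine ⟨t, ht, ?_⟩
    calc Complex.exp (Complex.I * ((t₀ : ℂ) + (j : ℂ) * (δ : ℂ)))
        = Complex.exp (Complex.I * (t₀ : ℂ)) * Complex.exp (Complex.I * ((j : ℂ) * (δ : ℂ))) := by
          rw [← Complex.exp_add]; congr 1; ring
      _ = Complex.exp (Complex.I * ((k : ℂ) * (θ₀ : ℂ)))
            * Complex.exp (Complex.I * ((j : ℂ) * (δ : ℂ))) := by rw [hek]
      _ = Complex.exp (((k - j : ℕ) : ℂ) * (Complex.I * (θ₀ : ℂ))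
            + ((j : ℕ) : ℂ) * (Complex.I * ((θ₀ : ℂ) + (δ : ℂ)))) := by
          rw [← Complex.exp_add]; congr 1
          push_cast [Nat.cast_sub hj]
          ring
      _ = Complex.exp (Complex.I * (θ₀ : ℂ)) ^ (k - j)
            * Complex.exp (Complex.I * ((θ₀ : ℂ) + (δ : ℂ))) ^ j := by
          rw [Complex.exp_add, Complex.exp_nat_mul, Complex.exp_nat_mul]
      _ = z₀ ^ (k - j) * z ^ j := by rw [← hz₀e, ← hform z hz]
      _ = Complex.exp (Complex.I * (t : ℂ)) := he
  have hmemW : L / (k : ℝ) ∈ {L' : ℝ | 0 ≤ L' ∧ ∃ a' : ℝ, ∀ z ∈ spectrum ℂ W,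
      ∃ t ∈ Set.Icc a' (a' + L'), z = Complex.exp (Complex.I * t)} := by
    refine ⟨by positivity, θ₀ + (a - t₀) / k, fun z hz => ?_⟩
    refine ⟨θ₀ + Complex.arg (z / z₀), ?_, ?_⟩
    · obtain ⟨hc1, hc2⟩ := claimC z hz
      constructor
      · have h5 : (a - t₀) / k ≤ Complex.arg (z / z₀) := by
          rw [div_le_iff₀ hk0]; nlinarith
        linarith
      · have h5 : Complex.arg (z / z₀) ≤ (a - t₀) / k + L / k := by
          rw [← add_div, le_div_iff₀ hk0]; nlinarith
        linarith
    · rw [Complex.ofReal_add]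
      exact hform z hz
  have hfin : arcTheta W ≤ L / k := csInf_le ⟨0, fun x hx => hx.1⟩ hmemW
  calc (k : ℝ) * arcTheta W ≤ (k : ℝ) * (L / k) :=
        mul_le_mul_of_nonneg_left hfin (by positivity)
    _ = L := by field_simp
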